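/- Let c' > 0, r₁ > 0, μ > 0, and set λ± = (-(c' + 1/r₁) ± √((c'+1/r₁)² + 2μ))/2. Define β(r) = λ₊ e^{λ₋ r} - λ₋ e^{λ₊ r} for r ≥ 0. Then β is positive and strictly increasing on [0,∞), and β'(r) < √(μ/2)·β(r) for all r > 0. -/

import Mathlib

open Set

theorem stmt7 (c' r₁ μ : ℝ) (hc : 0 < c') (hr : 0 < r₁) (hμ : 0 < μ)
    (lp lm : ℝ)
    (hlp : lp = (-(c' + 1 / r₁) + Real.sqrt ((c' + 1 / r₁) ^ 2 + 2 * μ)) / 2)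
    (hlm : lm = (-(c' + 1 / r₁) - Real.sqrt ((c' + 1 / r₁) ^ 2 + 2 * μ)) / 2)
    (β : ℝ → ℝ)
    (hβ : β = fun r => lp * Real.exp (lm * r) - lm * Real.exp (lp * r)) :
    (∀ r ≥ (0:ℝ), 0 < β r) ∧
    StrictMonoOn β (Set.Ici 0) ∧
    (∀ r > (0:ℝ), deriv β r < Real.sqrt (μ / 2) * β r) := by
  set a : ℝ := c' + 1 / r₁ with ha
  have ha0 : 0 < a := by positivity
  set s : ℝ := Real.sqrt (a ^ 2 + 2 * μ) with hs
  have hs2 : s ^ 2 = a ^ 2 + 2 * μ := Real.sq_sqrt (by positivity)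
  have hs0 : 0 ≤ s := Real.sqrt_nonneg _
  clear_value s
  clear_value a
  have hsa : a < s := by nlinarith
  have hlp0 : 0 < lp := by rw [hlp]; linarith
  have hlm0 : lm < 0 := by rw [hlm]; nlinarith
  have hprod : lp * lm = -(μ / 2) := by rw [hlp, hlm]; nlinarith [hs2]
  have hsum : lp + lm = -a := by rw [hlp, hlm]; ring
  have hlt : lp < -lm := by nlinarith
  -- derivative
  have hderiv : ∀ r : ℝ, HasDerivAt β (lp * lm * (Real.exp (lm * r) - Real.exp (lp * r))) r := by
    intro r
    have h1 : HasDerivAt (fun r : ℝ => Real.exp (lm * r)) (Real.exp (lm * r) * lm) r :=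
      (Real.hasDerivAt_exp (lm * r)).comp r (by simpa using (hasDerivAt_id r).const_mul lm)
    have h2 : HasDerivAt (fun r : ℝ => Real.exp (lp * r)) (Real.exp (lp * r) * lp) r :=
      (Real.hasDerivAt_exp (lp * r)).comp r (by simpa using (hasDerivAt_id r).const_mul lp)
    have := (h1.const_mul lp).sub (h2.const_mul lm)
    rw [hβ]
    exact this.congr_deriv (by ring)
  have hpos : ∀ r ≥ (0:ℝ), 0 < β r := by
    intro r _
    simp only [hβ]
    have e1 : 0 < Real.exp (lm * r) := Real.exp_pos _
    have e2 : 0 < Real.exp (lp * r) := Real.exp_pos _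
    nlinarith
  refine ⟨hpos, ?_, ?_⟩
  · apply StrictMonoOn.mono (s := Set.Ici (0:ℝ)) ?_ le_rfl
    apply strictMonoOn_of_deriv_pos (convex_Ici 0)
    · exact fun x _ => ((hderiv x).differentiableAt).continuousAt.continuousWithinAt
    · intro x hx
      rw [interior_Ici] at hx
      rw [(hderiv x).deriv]
      have : Real.exp (lm * x) < Real.exp (lp * x) := by
        apply Real.exp_lt_exp.2
        have : lm * x < lp * x := by
          apply mul_lt_mul_of_pos_right _ hx
          linarith
        exact this
      nlinarith
  · intro r hr0
    rw [(hderiv r).deriv]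
    simp only [hβ]
    set k : ℝ := Real.sqrt (μ / 2) with hk
    have hk2 : k ^ 2 = μ / 2 := Real.sq_sqrt (by positivity)
    have hk0 : 0 < k := Real.sqrt_pos.2 (by positivity)
    have hklm : k < -lm := by nlinarith
    have e1 : 0 < Real.exp (lm * r) := Real.exp_pos _
    have e2 : 0 < Real.exp (lp * r) := Real.exp_pos _
    have key1 : 0 < (-lm - k) * k * Real.exp (lp * r) :=
      mul_pos (mul_pos (by linarith) hk0) e2
    have key2 : 0 < (k * lp + k ^ 2) * Real.exp (lm * r) := by
      apply mul_pos (by nlinarith) e1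
    nlinarith [key1, key2]
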